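/- Let c be a real constant and let g be a function on an open interval with g' nowhere zero satisfying g''(v) + (2/(c²+1)) g'(v)³ + 2 g'(v) = 0. Then W(v) := g'(v)^{-2} satisfies W'(v) = 4/(c²+1) + 4 W(v), and hence W(v) = â e^{4v} - 1/(c²+1) for some constant â > 0. -/

import Mathlib

theorem stmt_6 (c α β : ℝ) (hαβ : α < β) (g : ℝ → ℝ)
    (hd1 : ∀ v ∈ Set.Ioo α β, DifferentiableAt ℝ g v)
    (hd2 : ∀ v ∈ Set.Ioo α β, DifferentiableAt ℝ (deriv g) v)
    (hne : ∀ v ∈ Set.Ioo α β, deriv g v ≠ 0)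
    (hode : ∀ v ∈ Set.Ioo α β,
      deriv (deriv g) v + (2 / (c ^ 2 + 1)) * (deriv g v) ^ 3 + 2 * deriv g v = 0) :
    (∀ v ∈ Set.Ioo α β,
      deriv (fun x => ((deriv g x) ^ 2)⁻¹) v
        = 4 / (c ^ 2 + 1) + 4 * ((deriv g v) ^ 2)⁻¹) ∧
    ∃ a : ℝ, 0 < a ∧ ∀ v ∈ Set.Ioo α β,
      ((deriv g v) ^ 2)⁻¹ = a * Real.exp (4 * v) - 1 / (c ^ 2 + 1) := by
  have hc : (0:ℝ) < c ^ 2 + 1 := by positivity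
  set W : ℝ → ℝ := fun x => ((deriv g x) ^ 2)⁻¹ with hWdef
  have hW : ∀ v ∈ Set.Ioo α β,
      HasDerivAt W (4 / (c ^ 2 + 1) + 4 * ((deriv g v) ^ 2)⁻¹) v := by
    intro v hv
    have hg' : HasDerivAt (deriv g) (deriv (deriv g) v) v := (hd2 v hv).hasDerivAt
    have hsq : HasDerivAt (fun x => (deriv g x) ^ 2)
        (2 * (deriv g v) * deriv (deriv g) v) v := by
      have := hg'.fun_pow 2
      simpa [mul_comm, mul_assoc, mul_left_comm] using this
    have hne2 : (deriv g v) ^ 2 ≠ 0 := pow_ne_zero _ (hne v hv)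
    have hinv := hsq.fun_inv hne2
    refine hinv.congr_deriv ?_
    have h0 := hode v hv
    have hg2 : deriv (deriv g) v
        = -(2 / (c ^ 2 + 1)) * (deriv g v) ^ 3 - 2 * deriv g v := by linarith
    rw [hg2]
    have := hne v hv
    field_simp
    ring
  refine ⟨fun v hv => (hW v hv).deriv, ?_⟩
  -- constancy of h x = (W x + 1/(c²+1)) * exp (-4 x)
  set h : ℝ → ℝ := fun x => (W x + 1 / (c ^ 2 + 1)) * Real.exp (-(4 * x)) with hhdef
  have hh : ∀ v ∈ Set.Ioo α β, HasDerivAt h 0 v := by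
    intro v hv
    have h1 : HasDerivAt (fun x => W x + 1 / (c ^ 2 + 1))
        (4 / (c ^ 2 + 1) + 4 * ((deriv g v) ^ 2)⁻¹) v := (hW v hv).add_const _
    have h2 : HasDerivAt (fun x : ℝ => Real.exp (-(4 * x)))
        (-4 * Real.exp (-(4 * v))) v := by
      have : HasDerivAt (fun x : ℝ => -(4 * x)) (-4) v := by
        simpa using ((hasDerivAt_id v).const_mul (4:ℝ)).fun_neg
      simpa [mul_comm] using this.exp
    have := h1.fun_mul h2
    refine this.congr_deriv ?_
    simp only [hWdef]
    ring
  set v0 : ℝ := (α + β) / 2 with hv0def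
  have hv0 : v0 ∈ Set.Ioo α β := ⟨by simp only [hv0def]; linarith, by simp only [hv0def]; linarith⟩
  have hconst : ∀ v ∈ Set.Ioo α β, h v = h v0 := by
    intro v hv
    have hconv : Convex ℝ (Set.Ioo α β) := convex_Ioo α β
    have hdiff : DifferentiableOn ℝ h (Set.Ioo α β) :=
      fun x hx => ((hh x hx).differentiableAt).differentiableWithinAt
    apply hconv.is_const_of_fderivWithin_eq_zero hdiff _ hv hv0
    intro x hx
    rw [fderivWithin_of_isOpen isOpen_Ioo hx, (hh x hx).hasFDerivAt.fderiv]
    ext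
    simp
  refine ⟨h v0, ?_, ?_⟩
  · have hWpos : 0 < W v0 := by
      have := hne v0 hv0
      simp only [hWdef]
      positivity
    have : 0 < W v0 + 1 / (c ^ 2 + 1) := by positivity
    exact mul_pos this (Real.exp_pos _)
  · intro v hv
    have := hconst v hv
    have hexp : Real.exp (-(4 * v)) * Real.exp (4 * v) = 1 := by
      rw [← Real.exp_add]; simp
    have : (W v + 1 / (c ^ 2 + 1)) * Real.exp (-(4 * v)) * Real.exp (4 * v)
        = h v0 * Real.exp (4 * v) := by rw [← this]
    rw [mul_assoc, hexp, mul_one] at this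
    simp only [hWdef] at this ⊢
    linarith
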